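/- Let n ≥ 3 and let A be a symmetric n×n matrix having exactly two distinct eigenvalues λ < μ, where λ has multiplicity one with unit eigenvector v¹. Then q_A(x) = ⟨Ax,x⟩ is spherically quasi-convex on S^{n-1} ∩ ℝ^n_{++} if and only if v¹ or -v¹ has all components nonnegative. -/

import Mathlib

open RealInnerProductSpace

noncomputable def geo {n : ℕ} (x y : EuclideanSpace ℝ (Fin n)) (t : ℝ) :
    EuclideanSpace ℝ (Fin n) :=
  (Real.cos (t * Real.arccos ⟪x, y⟫) -
      ⟪x, y⟫ * Real.sin (t * Real.arccos ⟪x, y⟫) / Real.sqrt (1 - ⟪x, y⟫ ^ 2)) • x +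
    (Real.sin (t * Real.arccos ⟪x, y⟫) / Real.sqrt (1 - ⟪x, y⟫ ^ 2)) • y

def IsMinimalGeodesic {n : ℕ} (γ : ℝ → EuclideanSpace ℝ (Fin n)) : Prop :=
  (∃ x y : EuclideanSpace ℝ (Fin n), ‖x‖ = 1 ∧ ‖y‖ = 1 ∧ y ≠ x ∧ y ≠ -x ∧
      ∀ t, γ t = geo x y t) ∨
  (∃ x v : EuclideanSpace ℝ (Fin n), ‖x‖ = 1 ∧ ‖v‖ = 1 ∧ ⟪x, v⟫ = 0 ∧
      ∀ t, γ t = Real.cos (Real.pi * t) • x + Real.sin (Real.pi * t) • v)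

def SphericallyConvex {n : ℕ} (S : Set (EuclideanSpace ℝ (Fin n))) : Prop :=
  ∀ γ : ℝ → EuclideanSpace ℝ (Fin n), IsMinimalGeodesic γ → γ 0 ∈ S → γ 1 ∈ S →
    ∀ t ∈ Set.Icc (0 : ℝ) 1, γ t ∈ S

def SphQuasiconvexOn {n : ℕ} (S : Set (EuclideanSpace ℝ (Fin n)))
    (f : EuclideanSpace ℝ (Fin n) → ℝ) : Prop :=
  ∀ γ : ℝ → EuclideanSpace ℝ (Fin n), IsMinimalGeodesic γ →
    (∀ t ∈ Set.Icc (0 : ℝ) 1, γ t ∈ S) →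
    ∀ t ∈ Set.Icc (0 : ℝ) 1, f (γ t) ≤ max (f (γ 0)) (f (γ 1))

lemma sin_sq_identity (a b : ℝ) :
    Real.sin a ^ 2 + Real.sin b ^ 2 + 2 * (Real.sin a * Real.sin b) * Real.cos (a+b)
      = Real.sin (a+b) ^ 2 := by
  rw [Real.sin_add, Real.cos_add]
  nlinarith [Real.sin_sq_add_cos_sq a, Real.sin_sq_add_cos_sq b]

lemma sin_add_le (a b : ℝ) (ha : 0 ≤ Real.sin a) (hb : 0 ≤ Real.sin b) :
    Real.sin (a + b) ≤ Real.sin a + Real.sin b := by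
  rw [Real.sin_add]
  nlinarith [Real.cos_le_one a, Real.cos_le_one b, Real.neg_one_le_cos a, Real.neg_one_le_cos b]

lemma sin_arccos_pos {d : ℝ} (h1 : -1 < d) (h2 : d < 1) : 0 < Real.sin (Real.arccos d) := by
  rw [Real.sin_arccos]
  apply Real.sqrt_pos.2; nlinarith

lemma coef_eq {d : ℝ} (h1 : -1 < d) (h2 : d < 1) (t : ℝ) :
    Real.cos (t * Real.arccos d) - d * Real.sin (t * Real.arccos d) / Real.sqrt (1 - d ^ 2)
      = Real.sin ((1 - t) * Real.arccos d) / Real.sin (Real.arccos d) := by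
  have hs : Real.sin (Real.arccos d) = Real.sqrt (1 - d ^ 2) := Real.sin_arccos d
  have hsp : 0 < Real.sin (Real.arccos d) := sin_arccos_pos h1 h2
  have hc : Real.cos (Real.arccos d) = d := Real.cos_arccos h1.le h2.le
  rw [← hs]
  rw [show (1 - t) * Real.arccos d = Real.arccos d - t * Real.arccos d by ring,
    Real.sin_sub, hc]
  field_simp

section

variable {n : ℕ} (x y : EuclideanSpace ℝ (Fin n))

lemma d_mem (hx : ‖x‖ = 1) (hy : ‖y‖ = 1) (hne : y ≠ x) (hne' : y ≠ -x) :
    -1 < ⟪x, y⟫ ∧ ⟪x, y⟫ < 1 := by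
  constructor
  · have h := (inner_lt_one_iff_real_of_norm_eq_one hx (by simpa using hy : ‖-y‖ = 1)).2
      (by intro h; apply hne'; rw [h]; simp)
    rw [inner_neg_right] at h
    linarith
  · exact (inner_lt_one_iff_real_of_norm_eq_one hx hy).2 (fun h => hne h.symm)

lemma geo_eq (hx : ‖x‖ = 1) (hy : ‖y‖ = 1) (hne : y ≠ x) (hne' : y ≠ -x) (t : ℝ) :
    geo x y t = (Real.sin ((1-t) * Real.arccos ⟪x, y⟫) / Real.sin (Real.arccos ⟪x, y⟫)) • x
      + (Real.sin (t * Real.arccos ⟪x, y⟫) / Real.sin (Real.arccos ⟪x, y⟫)) • y := by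
  obtain ⟨h1, h2⟩ := d_mem x y hx hy hne hne'
  rw [geo, coef_eq h1 h2, Real.sin_arccos]

lemma geo_zero (hx : ‖x‖ = 1) (hy : ‖y‖ = 1) (hne : y ≠ x) (hne' : y ≠ -x) :
    geo x y 0 = x := by
  obtain ⟨h1, h2⟩ := d_mem x y hx hy hne hne'
  have hsp : Real.sin (Real.arccos ⟪x, y⟫) ≠ 0 := (sin_arccos_pos h1 h2).ne'
  rw [geo_eq x y hx hy hne hne']
  simp only [sub_zero, one_mul, zero_mul, Real.sin_zero, zero_div, zero_smul, add_zero,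
    div_self hsp, one_smul]

lemma geo_one (hx : ‖x‖ = 1) (hy : ‖y‖ = 1) (hne : y ≠ x) (hne' : y ≠ -x) :
    geo x y 1 = y := by
  obtain ⟨h1, h2⟩ := d_mem x y hx hy hne hne'
  have hsp : Real.sin (Real.arccos ⟪x, y⟫) ≠ 0 := (sin_arccos_pos h1 h2).ne'
  rw [geo_eq x y hx hy hne hne']
  simp only [sub_self, one_mul, zero_mul, Real.sin_zero, zero_div, zero_smul, zero_add,
    div_self hsp, one_smul]

lemma smul_add_norm (a b : ℝ) (hx : ‖x‖ = 1) (hy : ‖y‖ = 1) :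
    ‖a • x + b • y‖ ^ 2 = a ^ 2 + b ^ 2 + 2 * (a * b) * ⟪x, y⟫ := by
  rw [norm_add_sq_real, norm_smul, norm_smul, real_inner_smul_left, real_inner_smul_right,
    hx, hy]
  simp only [Real.norm_eq_abs, mul_pow, sq_abs]
  ring

lemma geo_norm (hx : ‖x‖ = 1) (hy : ‖y‖ = 1) (hne : y ≠ x) (hne' : y ≠ -x) (t : ℝ) :
    ‖geo x y t‖ = 1 := by
  obtain ⟨h1, h2⟩ := d_mem x y hx hy hne hne'
  have hsp : 0 < Real.sin (Real.arccos ⟪x, y⟫) := sin_arccos_pos h1 h2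
  have hc : Real.cos (Real.arccos ⟪x, y⟫) = ⟪x, y⟫ := Real.cos_arccos h1.le h2.le
  set θ := Real.arccos ⟪x, y⟫ with hθ
  have key := sin_sq_identity ((1-t) * θ) (t * θ)
  rw [show (1-t) * θ + t * θ = θ by ring] at key
  have hsq : ‖geo x y t‖ ^ 2 = 1 := by
    rw [geo_eq x y hx hy hne hne', smul_add_norm x y _ _ hx hy, ← hθ, ← hc]
    field_simp
    nlinarith [key]
  have h3 : (‖geo x y t‖ - 1) * (‖geo x y t‖ + 1) = 0 := by nlinarith
  rcases mul_eq_zero.1 h3 with h | h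
  · linarith
  · linarith [norm_nonneg (geo x y t)]

lemma geo_inner (v : EuclideanSpace ℝ (Fin n)) (hx : ‖x‖ = 1) (hy : ‖y‖ = 1)
    (hne : y ≠ x) (hne' : y ≠ -x) (t : ℝ) :
    ⟪v, geo x y t⟫ = (Real.sin ((1-t) * Real.arccos ⟪x, y⟫) / Real.sin (Real.arccos ⟪x, y⟫)) * ⟪v, x⟫
      + (Real.sin (t * Real.arccos ⟪x, y⟫) / Real.sin (Real.arccos ⟪x, y⟫)) * ⟪v, y⟫ := by
  rw [geo_eq x y hx hy hne hne', inner_add_right, real_inner_smul_right, real_inner_smul_right]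

lemma geo_apply (hx : ‖x‖ = 1) (hy : ‖y‖ = 1) (hne : y ≠ x) (hne' : y ≠ -x) (t : ℝ) (k : Fin n) :
    geo x y t k = (Real.sin ((1-t) * Real.arccos ⟪x, y⟫) / Real.sin (Real.arccos ⟪x, y⟫)) * x k
      + (Real.sin (t * Real.arccos ⟪x, y⟫) / Real.sin (Real.arccos ⟪x, y⟫)) * y k := by
  rw [geo_eq x y hx hy hne hne']
  simp [PiLp.add_apply, PiLp.smul_apply]

end

lemma quad_form {n : ℕ} (A : EuclideanSpace ℝ (Fin n) →ₗ[ℝ] EuclideanSpace ℝ (Fin n))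
    (lam mu : ℝ) (v1 : EuclideanSpace ℝ (Fin n)) (hv1 : ‖v1‖ = 1) (heig : A v1 = lam • v1)
    (hrest : ∀ x, ⟪v1, x⟫ = 0 → A x = mu • x) (z : EuclideanSpace ℝ (Fin n)) :
    ⟪A z, z⟫ = mu * ‖z‖ ^ 2 - (mu - lam) * ⟪v1, z⟫ ^ 2 := by
  have hvv : ⟪v1, v1⟫ = 1 := by
    rw [real_inner_self_eq_norm_sq, hv1]; norm_num
  have hw : ⟪v1, z - ⟪v1, z⟫ • v1⟫ = 0 := by
    rw [inner_sub_right, real_inner_smul_right, hvv]; ring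
  have hAz : A z = (⟪v1, z⟫ * lam) • v1 + mu • (z - ⟪v1, z⟫ • v1) := by
    have h0 : z = ⟪v1, z⟫ • v1 + (z - ⟪v1, z⟫ • v1) := by abel
    rw [h0, map_add, map_smul, heig, hrest _ hw]
    simp [smul_smul]
  rw [hAz, inner_add_left, real_inner_smul_left, real_inner_smul_left,
    inner_sub_left, real_inner_smul_left, real_inner_self_eq_norm_sq]
  ring

lemma inner_pos_of_nonneg {n : ℕ} (v z : EuclideanSpace ℝ (Fin n)) (hv : ‖v‖ = 1)
    (hnn : ∀ i, 0 ≤ v i) (hz : ∀ i, 0 < z i) : 0 < ⟪v, z⟫ := by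
  have hsum : ⟪v, z⟫ = ∑ k, v k * z k := by
    simp [PiLp.inner_apply, RCLike.inner_apply, conj_trivial, mul_comm]
  obtain ⟨k, hk⟩ : ∃ k, v k ≠ 0 := by
    by_contra h
    push_neg at h
    have : v = 0 := by ext k; exact h k
    rw [this] at hv; simp at hv
  rw [hsum]
  apply Finset.sum_pos'
  · intro i _; exact mul_nonneg (hnn i) (hz i).le
  · exact ⟨k, Finset.mem_univ k, mul_pos (lt_of_le_of_ne (hnn k) (Ne.symm hk)) (hz k)⟩

lemma arith_max (lam mu fx fy g : ℝ) (hlt : lam < mu) (hfx : 0 < fx) (hfy : 0 < fy)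
    (hg : min fx fy ≤ g) :
    mu - (mu - lam) * g ^ 2 ≤ max (mu - (mu - lam) * fx ^ 2) (mu - (mu - lam) * fy ^ 2) := by
  rcases le_total fx fy with h | h
  · apply le_trans _ (le_max_left _ _)
    rw [min_eq_left h] at hg
    nlinarith [mul_nonneg (sub_nonneg.2 hg) (by linarith : (0:ℝ) ≤ g + fx)]
  · apply le_trans _ (le_max_right _ _)
    rw [min_eq_right h] at hg
    nlinarith [mul_nonneg (sub_nonneg.2 hg) (by linarith : (0:ℝ) ≤ g + fy)]

lemma qc_of_nonneg {n : ℕ} (hn : 3 ≤ n)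
    (A : EuclideanSpace ℝ (Fin n) →ₗ[ℝ] EuclideanSpace ℝ (Fin n))
    (lam mu : ℝ) (hlt : lam < mu)
    (v1 : EuclideanSpace ℝ (Fin n)) (hv1 : ‖v1‖ = 1) (heig : A v1 = lam • v1)
    (hrest : ∀ x, ⟪v1, x⟫ = 0 → A x = mu • x) (hnn : ∀ i, 0 ≤ v1 i) :
    SphQuasiconvexOn
        (Metric.sphere (0 : EuclideanSpace ℝ (Fin n)) 1 ∩ {x | ∀ i, 0 < x i})
        (fun x => ⟪A x, x⟫) := by
  intro γ hgeo hmem t ht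
  have i0 : Fin n := ⟨0, by omega⟩
  rcases hgeo with ⟨x, y, hx, hy, hne, hne', hγ⟩ | ⟨x, v, hx, hv, hxv, hγ⟩
  · -- main case
    obtain ⟨h1, h2⟩ := d_mem x y hx hy hne hne'
    set θ := Real.arccos ⟪x, y⟫ with hθdef
    have hθpos : 0 < θ := Real.arccos_pos.2 h2
    have hθpi : θ ≤ Real.pi := Real.arccos_le_pi _
    have hsθ : 0 < Real.sin θ := sin_arccos_pos h1 h2
    have hγ0 : γ 0 = x := by rw [hγ]; exact geo_zero x y hx hy hne hne'
    have hγ1 : γ 1 = y := by rw [hγ]; exact geo_one x y hx hy hne hne'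
    have hxS := hmem 0 (by norm_num)
    have hyS := hmem 1 (by norm_num)
    rw [hγ0] at hxS
    rw [hγ1] at hyS
    have hxpos : ∀ i, 0 < x i := hxS.2
    have hypos : ∀ i, 0 < y i := hyS.2
    have hfx : 0 < ⟪v1, x⟫ := inner_pos_of_nonneg v1 x hv1 hnn hxpos
    have hfy : 0 < ⟪v1, y⟫ := inner_pos_of_nonneg v1 y hv1 hnn hypos
    obtain ⟨ht0, ht1⟩ := ht
    set a := (1 - t) * θ with hadef
    set b := t * θ with hbdef
    have hab : a + b = θ := by ring
    have hsa : 0 ≤ Real.sin a :=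
      Real.sin_nonneg_of_nonneg_of_le_pi (mul_nonneg (by linarith) hθpos.le)
        (by nlinarith)
    have hsb : 0 ≤ Real.sin b :=
      Real.sin_nonneg_of_nonneg_of_le_pi (mul_nonneg (by linarith) hθpos.le)
        (by nlinarith)
    have hsum : Real.sin θ ≤ Real.sin a + Real.sin b := by
      rw [← hab]; exact sin_add_le a b hsa hsb
    set α := Real.sin a / Real.sin θ with hα
    set β := Real.sin b / Real.sin θ with hβ
    have hα0 : 0 ≤ α := div_nonneg hsa hsθ.le
    have hβ0 : 0 ≤ β := div_nonneg hsb hsθ.le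
    have hαβ : 1 ≤ α + β := by
      rw [hα, hβ, ← add_div, le_div_iff₀ hsθ]
      linarith
    have hg : ⟪v1, γ t⟫ = α * ⟪v1, x⟫ + β * ⟪v1, y⟫ := by
      rw [hγ]; exact geo_inner x y v1 hx hy hne hne' t
    set m := min ⟪v1, x⟫ ⟪v1, y⟫ with hm
    have hmpos : 0 < m := lt_min hfx hfy
    have hgm : m ≤ ⟪v1, γ t⟫ := by
      rw [hg]
      have h3 : m ≤ ⟪v1, x⟫ := min_le_left _ _
      have h4 : m ≤ ⟪v1, y⟫ := min_le_right _ _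
      nlinarith
    have hnγ : ‖γ t‖ = 1 := by rw [hγ]; exact geo_norm x y hx hy hne hne' t
    have hq : ∀ z : EuclideanSpace ℝ (Fin n), ‖z‖ = 1 →
        ⟪A z, z⟫ = mu - (mu - lam) * ⟪v1, z⟫ ^ 2 := by
      intro z hz
      rw [quad_form A lam mu v1 hv1 heig hrest z, hz]; ring
    have e0 : ⟪A (γ 0), γ 0⟫ = mu - (mu - lam) * ⟪v1, x⟫ ^ 2 := by
      rw [hγ0]; exact hq x hx
    have e1 : ⟪A (γ 1), γ 1⟫ = mu - (mu - lam) * ⟪v1, y⟫ ^ 2 := by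
      rw [hγ1]; exact hq y hy
    have et : ⟪A (γ t), γ t⟫ = mu - (mu - lam) * ⟪v1, γ t⟫ ^ 2 := hq (γ t) hnγ
    show ⟪A (γ t), γ t⟫ ≤ max ⟪A (γ 0), γ 0⟫ ⟪A (γ 1), γ 1⟫
    rw [et, e0, e1]
    exact arith_max lam mu _ _ _ hlt hfx hfy hgm
  · -- antipodal case: impossible since γ 0 = x and γ 1 = -x both positive
    exfalso
    have h0 := (hmem 0 (by norm_num)).2 i0
    have h1 := (hmem 1 (by norm_num)).2 i0
    rw [hγ 0] at h0
    rw [hγ 1] at h1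
    simp only [mul_zero, Real.cos_zero, Real.sin_zero, one_smul, zero_smul, add_zero,
      mul_one, Real.cos_pi, Real.sin_pi, neg_smul, neg_zero] at h0 h1
    have h1' : (0:ℝ) < -(x i0) := by simpa using h1
    linarith

lemma exists_pos_point {n : ℕ} (v1 : EuclideanSpace ℝ (Fin n)) (j : Fin n) (hj : 0 < v1 j) :
    ∃ x : EuclideanSpace ℝ (Fin n), ‖x‖ = 1 ∧ (∀ k, 0 < x k) ∧ 0 < ⟪v1, x⟫ := by
  set s := ∑ k, v1 k with hs
  set ε := v1 j / (2 * (|s| + 1)) with hε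
  have hεpos : 0 < ε := by
    apply div_pos hj
    positivity
  set u : EuclideanSpace ℝ (Fin n) := WithLp.toLp 2 (fun k => (if k = j then (1:ℝ) else 0) + ε) with hu
  have hupos : ∀ k, 0 < u k := by
    intro k
    show 0 < (if k = j then (1:ℝ) else 0) + ε
    split <;> linarith
  have hinner : ⟪v1, u⟫ = v1 j + ε * s := by
    have h1 : ⟪v1, u⟫ = ∑ k, v1 k * u k := by
      simp [PiLp.inner_apply, RCLike.inner_apply, conj_trivial, mul_comm]
    rw [h1]
    have h2 : ∀ k, v1 k * u k = (if k = j then v1 k else 0) + v1 k * ε := by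
      intro k
      show v1 k * ((if k = j then (1:ℝ) else 0) + ε) = _
      split <;> ring
    rw [Finset.sum_congr rfl (fun k _ => h2 k), Finset.sum_add_distrib,
      Finset.sum_ite_eq' Finset.univ j, ← Finset.sum_mul]
    simp [hs]
    ring
  have hinpos : 0 < ⟪v1, u⟫ := by
    rw [hinner]
    have he : ε * (2 * (|s| + 1)) = v1 j := by
      rw [hε]; field_simp
    nlinarith [neg_abs_le s, abs_nonneg s,
      mul_nonneg hεpos.le (by linarith [neg_abs_le s] : (0:ℝ) ≤ s + |s|)]
  have hu0 : u ≠ 0 := by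
    intro h
    have := hupos j
    rw [h] at this
    simp at this
  refine ⟨‖u‖⁻¹ • u, norm_smul_inv_norm hu0, ?_, ?_⟩
  · intro k
    have : (‖u‖⁻¹ • u) k = ‖u‖⁻¹ * u k := rfl
    rw [this]
    exact mul_pos (inv_pos.2 (norm_pos_iff.2 hu0)) (hupos k)
  · rw [real_inner_smul_right]
    exact mul_pos (inv_pos.2 (norm_pos_iff.2 hu0)) hinpos

lemma pos_comb (α β p q : ℝ) (hα : 0 ≤ α) (hβ : 0 ≤ β) (hs : 1 ≤ α + β)
    (hp : 0 < p) (hq : 0 < q) : 0 < α * p + β * q := by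
  rcases eq_or_lt_of_le hα with h | h
  · have hβ1 : 1 ≤ β := by linarith
    nlinarith
  · nlinarith

lemma coeffs_bounds {d : ℝ} (h1 : -1 < d) (h2 : d < 1) {t : ℝ} (ht0 : 0 ≤ t) (ht1 : t ≤ 1) :
    0 ≤ Real.sin ((1-t) * Real.arccos d) / Real.sin (Real.arccos d) ∧
    0 ≤ Real.sin (t * Real.arccos d) / Real.sin (Real.arccos d) ∧
    1 ≤ Real.sin ((1-t) * Real.arccos d) / Real.sin (Real.arccos d)
        + Real.sin (t * Real.arccos d) / Real.sin (Real.arccos d) := by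
  set θ := Real.arccos d with hθ
  have hθpos : 0 < θ := Real.arccos_pos.2 h2
  have hθpi : θ ≤ Real.pi := Real.arccos_le_pi _
  have hsθ : 0 < Real.sin θ := sin_arccos_pos h1 h2
  have hsa : 0 ≤ Real.sin ((1-t) * θ) :=
    Real.sin_nonneg_of_nonneg_of_le_pi (mul_nonneg (by linarith) hθpos.le) (by nlinarith)
  have hsb : 0 ≤ Real.sin (t * θ) :=
    Real.sin_nonneg_of_nonneg_of_le_pi (mul_nonneg (by linarith) hθpos.le) (by nlinarith)
  have hsum : Real.sin θ ≤ Real.sin ((1-t) * θ) + Real.sin (t * θ) := by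
    have := sin_add_le ((1-t) * θ) (t * θ) hsa hsb
    rw [show (1-t) * θ + t * θ = θ by ring] at this
    exact this
  refine ⟨div_nonneg hsa hsθ.le, div_nonneg hsb hsθ.le, ?_⟩
  rw [← add_div, le_div_iff₀ hsθ]
  linarith

set_option maxHeartbeats 1000000 in

lemma not_qc {n : ℕ} (hn : 3 ≤ n)
    (A : EuclideanSpace ℝ (Fin n) →ₗ[ℝ] EuclideanSpace ℝ (Fin n))
    (lam mu : ℝ) (hlt : lam < mu)
    (v1 : EuclideanSpace ℝ (Fin n)) (hv1 : ‖v1‖ = 1) (heig : A v1 = lam • v1)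
    (hrest : ∀ x, ⟪v1, x⟫ = 0 → A x = mu • x)
    (hneg : ∃ i, v1 i < 0) (hpos : ∃ j, 0 < v1 j) :
    ¬ SphQuasiconvexOn
        (Metric.sphere (0 : EuclideanSpace ℝ (Fin n)) 1 ∩ {x | ∀ i, 0 < x i})
        (fun x => ⟪A x, x⟫) := by
  intro hQ
  obtain ⟨i, hi⟩ := hneg
  obtain ⟨j, hj⟩ := hpos
  obtain ⟨x, hx1, hxpos, hfx⟩ := exists_pos_point v1 j hj
  have hi' : 0 < (-v1) i := by
    have : (-v1 : EuclideanSpace ℝ (Fin n)) i = -(v1 i) := rfl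
    rw [this]; linarith
  obtain ⟨y, hy1, hypos, hfy'⟩ := exists_pos_point (-v1) i hi'
  have hfy : ⟪v1, y⟫ < 0 := by rw [inner_neg_left] at hfy'; linarith
  have hne : y ≠ x := by intro h; rw [h] at hfy; linarith
  have i0 : Fin n := ⟨0, by omega⟩
  have hne' : y ≠ -x := by
    intro h
    have h1 := hypos i0
    rw [h] at h1
    have h2 : (-x : EuclideanSpace ℝ (Fin n)) i0 = -(x i0) := rfl
    rw [h2] at h1
    linarith [hxpos i0]
  obtain ⟨hd1, hd2⟩ := d_mem x y hx1 hy1 hne hne'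
  set θ := Real.arccos ⟪x, y⟫ with hθ
  have hsθ : 0 < Real.sin θ := sin_arccos_pos hd1 hd2
  set γ : ℝ → EuclideanSpace ℝ (Fin n) := fun t => geo x y t with hγ
  have hmin : IsMinimalGeodesic γ := Or.inl ⟨x, y, hx1, hy1, hne, hne', fun t => rfl⟩
  have hmem : ∀ t ∈ Set.Icc (0:ℝ) 1, γ t ∈
      Metric.sphere (0 : EuclideanSpace ℝ (Fin n)) 1 ∩ {x | ∀ i, 0 < x i} := by
    intro t ht
    obtain ⟨c1, c2, c3⟩ := coeffs_bounds hd1 hd2 ht.1 ht.2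
    refine ⟨mem_sphere_zero_iff_norm.2 (geo_norm x y hx1 hy1 hne hne' t), ?_⟩
    intro k
    show 0 < geo x y t k
    rw [geo_apply x y hx1 hy1 hne hne' t k]
    exact pos_comb _ _ _ _ c1 c2 c3 (hxpos k) (hypos k)
  set g : ℝ → ℝ := fun t =>
    Real.sin ((1-t) * θ) / Real.sin θ * ⟪v1, x⟫
      + Real.sin (t * θ) / Real.sin θ * ⟪v1, y⟫ with hgdef
  have hcont : Continuous g := by
    apply Continuous.add
    · exact (((Real.continuous_sin.comp (by continuity)).div_const _).mul continuous_const)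
    · exact (((Real.continuous_sin.comp (by continuity)).div_const _).mul continuous_const)
  have hg0 : g 0 = ⟪v1, x⟫ := by simp [hgdef, div_self hsθ.ne']
  have hg1 : g 1 = ⟪v1, y⟫ := by simp [hgdef, div_self hsθ.ne']
  have hmemIcc : (0:ℝ) ∈ Set.Icc (g 1) (g 0) := by
    rw [hg0, hg1]; exact ⟨hfy.le, hfx.le⟩
  obtain ⟨t0, ht0, hgt0⟩ := intermediate_value_Icc' zero_le_one hcont.continuousOn hmemIcc
  have hginner : ⟪v1, γ t0⟫ = 0 := by
    show ⟪v1, geo x y t0⟫ = 0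
    rw [geo_inner x y v1 hx1 hy1 hne hne' t0]
    exact hgt0
  have hq : ∀ z : EuclideanSpace ℝ (Fin n), ‖z‖ = 1 →
      ⟪A z, z⟫ = mu - (mu - lam) * ⟪v1, z⟫ ^ 2 := by
    intro z hz
    rw [quad_form A lam mu v1 hv1 heig hrest z, hz]; ring
  have hkey : ⟪A (γ t0), γ t0⟫ ≤ max ⟪A (γ 0), γ 0⟫ ⟪A (γ 1), γ 1⟫ :=
    hQ γ hmin hmem t0 ht0
  have hγ0 : γ 0 = x := geo_zero x y hx1 hy1 hne hne'
  have hγ1 : γ 1 = y := geo_one x y hx1 hy1 hne hne'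
  have hqt : ⟪A (γ t0), γ t0⟫ = mu := by
    rw [hq (γ t0) (geo_norm x y hx1 hy1 hne hne' t0), hginner]; ring
  have hq0 : ⟪A (γ 0), γ 0⟫ = mu - (mu - lam) * ⟪v1, x⟫ ^ 2 := by
    rw [hγ0]; exact hq x hx1
  have hq1 : ⟪A (γ 1), γ 1⟫ = mu - (mu - lam) * ⟪v1, y⟫ ^ 2 := by
    rw [hγ1]; exact hq y hy1
  rw [hqt, hq0, hq1] at hkey
  have hmax : max (mu - (mu - lam) * ⟪v1, x⟫ ^ 2) (mu - (mu - lam) * ⟪v1, y⟫ ^ 2) < mu :=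
    max_lt (by nlinarith [mul_pos hfx hfx]) (by nlinarith [mul_pos_of_neg_of_neg hfy hfy])
  linarith

theorem stmt16 (n : ℕ) (hn : 3 ≤ n)
    (A : EuclideanSpace ℝ (Fin n) →ₗ[ℝ] EuclideanSpace ℝ (Fin n))
    (hsymm : ∀ x y, ⟪A x, y⟫ = ⟪x, A y⟫)
    (lam mu : ℝ) (hlt : lam < mu)
    (v1 : EuclideanSpace ℝ (Fin n)) (hv1 : ‖v1‖ = 1) (heig : A v1 = lam • v1)
    (hrest : ∀ x, ⟪v1, x⟫ = 0 → A x = mu • x) :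
    SphQuasiconvexOn
        (Metric.sphere (0 : EuclideanSpace ℝ (Fin n)) 1 ∩ {x | ∀ i, 0 < x i})
        (fun x => ⟪A x, x⟫) ↔
      ((∀ i, 0 ≤ v1 i) ∨ (∀ i, v1 i ≤ 0)) := by
  constructor
  · intro hQ
    by_contra hcon
    push_neg at hcon
    obtain ⟨h1, h2⟩ := hcon
    obtain ⟨i, hi⟩ := h1
    obtain ⟨j, hj⟩ := h2
    exact not_qc hn A lam mu hlt v1 hv1 heig hrest ⟨i, by linarith⟩ ⟨j, by linarith⟩ hQ
  · rintro (h | h)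
    · exact qc_of_nonneg hn A lam mu hlt v1 hv1 heig hrest h
    · refine qc_of_nonneg hn A lam mu hlt (-v1) ?_ ?_ ?_ ?_
      · simpa using hv1
      · rw [map_neg, heig, smul_neg]
      · intro x hx
        apply hrest x
        rwa [inner_neg_left, neg_eq_zero] at hx
      · intro k
        have hk : (-v1 : EuclideanSpace ℝ (Fin n)) k = -(v1 k) := rfl
        rw [hk]; linarith [h k]
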